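/- Let $I, J$ be finite subsets of $\{1,\dots,N\}$ with $|I| = |J| = k$ and $I \neq J$. Write $S = I \cap J$ and $T = I \Delta J$. Then $J \setminus I$ and $I \setminus J$ are nonempty, disjoint, their union is $T$, and if $P \subseteq T$ satisfies $S \cup P \succeq J$ and $S \cup (T\setminus P) \succeq I$ (componentwise order on equal-size subsets), then $P = J \setminus I$. -/

import Mathlib

/-- Componentwise order on equal-cardinality subsets: `A ⪯ B` iff `a_p ≤ b_p` for all `p`. -/
def finsetCwLe {N : ℕ} (A B : Finset (Fin N)) : Prop :=
  ∃ h : A.card = B.card, ∀ p : Fin A.card,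
    A.orderEmbOfFin rfl p ≤ B.orderEmbOfFin h.symm p

lemma image_orderEmbOfFin {N k : ℕ} (A : Finset (Fin N)) (h : A.card = k) :
    Finset.image (A.orderEmbOfFin h) Finset.univ = A := by
  apply Finset.eq_of_subset_of_card_le
  · intro x hx
    simp only [Finset.mem_image] at hx
    obtain ⟨i, _, rfl⟩ := hx
    exact A.orderEmbOfFin_mem h i
  · rw [Finset.card_image_of_injective _ (A.orderEmbOfFin h).injective]
    simp [h]

lemma sum_emb {N k : ℕ} (A : Finset (Fin N)) (h : A.card = k) :
    ∑ x ∈ A, (x : ℕ) = ∑ i : Fin k, ((A.orderEmbOfFin h i : Fin N) : ℕ) := by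
  conv_lhs => rw [← image_orderEmbOfFin A h]
  rw [Finset.sum_image]
  intro x _ y _ hxy
  exact (A.orderEmbOfFin h).injective hxy

lemma cw_sum_le {N : ℕ} {A B : Finset (Fin N)} (h : finsetCwLe A B) :
    ∑ x ∈ A, (x : ℕ) ≤ ∑ x ∈ B, (x : ℕ) := by
  obtain ⟨hc, hle⟩ := h
  rw [sum_emb A rfl, sum_emb B hc.symm]
  exact Finset.sum_le_sum fun i _ => hle i

lemma cw_eq {N : ℕ} {A B : Finset (Fin N)} (h : finsetCwLe A B)
    (hsum : ∑ x ∈ A, (x : ℕ) = ∑ x ∈ B, (x : ℕ)) : A = B := by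
  obtain ⟨hc, hle⟩ := h
  rw [sum_emb A rfl, sum_emb B hc.symm] at hsum
  have heq : ∀ i ∈ (Finset.univ : Finset (Fin A.card)),
      ((A.orderEmbOfFin rfl i : Fin N) : ℕ) = ((B.orderEmbOfFin hc.symm i : Fin N) : ℕ) :=
    (Finset.sum_eq_sum_iff_of_le (fun i _ => Fin.le_iff_val_le_val.mp (hle i))).mp hsum
  have hfun : ∀ i : Fin A.card, A.orderEmbOfFin rfl i = B.orderEmbOfFin hc.symm i :=
    fun i => Fin.ext (heq i (Finset.mem_univ i))
  rw [← image_orderEmbOfFin A rfl, ← image_orderEmbOfFin B hc.symm]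
  exact Finset.image_congr fun i _ => hfun i

theorem stmt8 (N k : ℕ) (I J : Finset (Fin N))
    (hI : I.card = k) (hJ : J.card = k) (hne : I ≠ J)
    (S T : Finset (Fin N)) (hS : S = I ∩ J) (hT : T = (I \ J) ∪ (J \ I))
    (P : Finset (Fin N)) (hPT : P ⊆ T)
    (h1 : finsetCwLe J (S ∪ P))
    (h2 : finsetCwLe I (S ∪ (T \ P))) :
    (J \ I).Nonempty ∧ (I \ J).Nonempty ∧ Disjoint (J \ I) (I \ J) ∧
      (J \ I) ∪ (I \ J) = T ∧ P = J \ I := by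
  subst hS hT
  have hBne : (J \ I).Nonempty := by
    rw [Finset.sdiff_nonempty]
    intro hsub
    exact hne (Finset.eq_of_subset_of_card_le hsub (by omega)).symm
  have hAne : (I \ J).Nonempty := by
    rw [Finset.sdiff_nonempty]
    intro hsub
    exact hne (Finset.eq_of_subset_of_card_le hsub (by omega))
  refine ⟨hBne, hAne, disjoint_sdiff_sdiff, Finset.union_comm _ _, ?_⟩
  -- notation
  set S := I ∩ J with hS
  set T := (I \ J) ∪ (J \ I) with hT
  have hST : Disjoint S T := by
    rw [hS, hT, Finset.disjoint_union_right]
    constructor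
    · exact Finset.disjoint_sdiff.mono_left Finset.inter_subset_right
    · exact Finset.disjoint_sdiff.mono_left Finset.inter_subset_left
  have hSP : Disjoint S P := hST.mono_right hPT
  have hSTP : Disjoint S (T \ P) := hST.mono_right (Finset.sdiff_subset)
  have hdAB : Disjoint (I \ J) (J \ I) := disjoint_sdiff_sdiff
  have hJeq : S ∪ (J \ I) = J := by rw [hS, Finset.inter_comm]; exact sup_inf_sdiff J I
  have hIeq : S ∪ (I \ J) = I := sup_inf_sdiff I J
  have hPTP : P ∪ (T \ P) = T := Finset.union_sdiff_of_subset hPT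
  have hdPTP : Disjoint P (T \ P) := Finset.disjoint_sdiff
  have hSJI : Disjoint S (J \ I) := hST.mono_right Finset.subset_union_right
  have hSIJ : Disjoint S (I \ J) := hST.mono_right Finset.subset_union_left
  -- sums
  have key1 := cw_sum_le h1
  have key2 := cw_sum_le h2
  have e1 : ∑ x ∈ S ∪ P, (x : ℕ) = ∑ x ∈ S, (x : ℕ) + ∑ x ∈ P, (x : ℕ) :=
    Finset.sum_union hSP
  have e2 : ∑ x ∈ S ∪ (T \ P), (x : ℕ) = ∑ x ∈ S, (x : ℕ) + ∑ x ∈ T \ P, (x : ℕ) :=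
    Finset.sum_union hSTP
  have e3 : ∑ x ∈ P, (x : ℕ) + ∑ x ∈ T \ P, (x : ℕ) = ∑ x ∈ T, (x : ℕ) := by
    rw [← Finset.sum_union hdPTP, hPTP]
  have e4 : ∑ x ∈ T, (x : ℕ) = ∑ x ∈ I \ J, (x : ℕ) + ∑ x ∈ J \ I, (x : ℕ) := by
    rw [hT, Finset.sum_union hdAB]
  have e5 : ∑ x ∈ J, (x : ℕ) = ∑ x ∈ S, (x : ℕ) + ∑ x ∈ J \ I, (x : ℕ) := by
    conv_lhs => rw [← hJeq]
    exact Finset.sum_union hSJI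
  have e6 : ∑ x ∈ I, (x : ℕ) = ∑ x ∈ S, (x : ℕ) + ∑ x ∈ I \ J, (x : ℕ) := by
    conv_lhs => rw [← hIeq]
    exact Finset.sum_union hSIJ
  have hsumJ : ∑ x ∈ J, (x : ℕ) = ∑ x ∈ S ∪ P, (x : ℕ) := by omega
  have hJP : J = S ∪ P := cw_eq h1 hsumJ
  have : P = (S ∪ P) \ S := (Finset.union_sdiff_cancel_left hSP).symm
  rw [this, ← hJP, hS]
  ext x
  simp only [Finset.mem_sdiff, Finset.mem_inter]
  tauto
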